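/- The function H̃ satisfies lim_{q → +∞} H̃(q) = 1. -/

import Mathlib

open Filter Set

/-- `w` is the root of `q (z^3 - z) + 1 = 0` with `Im w ≥ 0`, `Re w > 0` having the
smallest real part among all such roots. -/
def IsQtilde (q : ℝ) (w : ℂ) : Prop :=
  (q : ℂ) * (w ^ 3 - w) + 1 = 0 ∧ 0 ≤ w.im ∧ 0 < w.re ∧
    ∀ z : ℂ, (q : ℂ) * (z ^ 3 - z) + 1 = 0 → 0 ≤ z.im → 0 < z.re → w.re ≤ z.re

/-- `H̃(q) = |(q̃ - 1)/(q̃ + 1)| · exp(q · Re(q̃²))` where `q̃` is the distinguished root. -/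
noncomputable def Htilde (q : ℝ) : ℝ :=
  ‖(Classical.epsilon (IsQtilde q) - 1) / (Classical.epsilon (IsQtilde q) + 1)‖ *
    Real.exp (q * ((Classical.epsilon (IsQtilde q)) ^ 2).re)

lemma exists_root_small (q : ℝ) (hq : 3 ≤ q) :
    ∃ r : ℝ, 0 < r ∧ r ≤ 2 / q ∧ q * (r ^ 3 - r) + 1 = 0 := by
  have hq0 : (0:ℝ) < q := by linarith
  set f : ℝ → ℝ := fun x => q * (x ^ 3 - x) + 1 with hf
  have hcont : ContinuousOn f (Icc 0 (2 / q)) := by fun_prop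
  have h0 : f 0 = 1 := by simp [hf]
  have h2 : f (2 / q) < 0 := by
    have : f (2 / q) = 8 / q ^ 2 - 1 := by simp only [hf]; field_simp; ring
    rw [this]
    have : q ^ 2 ≥ 9 := by nlinarith
    rw [div_sub_one (by positivity)]
    apply div_neg_of_neg_of_pos <;> nlinarith
  have hle : (0:ℝ) ≤ 2 / q := by positivity
  have := intermediate_value_Icc' hle hcont
  have hmem : (0:ℝ) ∈ Icc (f (2 / q)) (f 0) := ⟨h2.le, by rw [h0]; norm_num⟩
  obtain ⟨r, hr, hfr⟩ := this hmem
  refine ⟨r, ?_, hr.2, hfr⟩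
  rcases lt_or_eq_of_le hr.1 with h | h
  · exact h
  · exfalso; rw [← h] at hfr; rw [h0] at hfr; norm_num at hfr

lemma exists_isQtilde (q : ℝ) (hq : 3 ≤ q) : ∃ w, IsQtilde q w := by
  have hq0 : (0:ℝ) < q := by linarith
  obtain ⟨r, hr0, hr2, hr⟩ := exists_root_small q hq
  set S : Set ℂ := {z : ℂ | (q : ℂ) * (z ^ 3 - z) + 1 = 0 ∧ 0 ≤ z.im ∧ 0 < z.re} with hS
  have hrS : (r : ℂ) ∈ S := by
    refine ⟨?_, by simp, by simpa using hr0⟩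
    have : ((q * (r ^ 3 - r) + 1 : ℝ) : ℂ) = 0 := by rw [hr]; simp
    push_cast at this
    linear_combination this
  have hfin : S.Finite := by
    have h1 : {z : ℂ | (Polynomial.C (q:ℂ) * (Polynomial.X ^ 3 - Polynomial.X) + 1).IsRoot z}.Finite := by
      apply Polynomial.finite_setOf_isRoot
      intro h
      have := congrArg (Polynomial.coeff · 3) h
      simp [Polynomial.coeff_add, Polynomial.coeff_C_mul, Polynomial.coeff_sub, Polynomial.coeff_X_pow,
        Polynomial.coeff_X, Polynomial.coeff_one, Complex.ofReal_eq_zero] at this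
      linarith
    refine h1.subset ?_
    intro z hz
    simpa [Polynomial.IsRoot] using hz.1
  obtain ⟨w, hwS, hwmin⟩ := Set.exists_min_image S Complex.re hfin ⟨_, hrS⟩
  exact ⟨w, hwS.1, hwS.2.1, hwS.2.2, fun z h1 h2 h3 => hwmin z ⟨h1, h2, h3⟩⟩

lemma abs_le_of_isQtilde (q : ℝ) (hq : 3 ≤ q) {w : ℂ} (hw : IsQtilde q w) :
    ‖w‖ ≤ 2 / q := by
  have hq0 : (0:ℝ) < q := by linarith
  obtain ⟨heq, him, hre, hmin⟩ := hw
  obtain ⟨r, hr0, hr2, hr⟩ := exists_root_small q hq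
  have hreq : w.re ≤ r := by
    apply hmin (r : ℂ) ?_ (by simp) (by simpa using hr0)
    have : ((q * (r ^ 3 - r) + 1 : ℝ) : ℂ) = 0 := by rw [hr]; simp
    push_cast at this
    linear_combination this
  have ha : w.re ≤ 2 / q := hreq.trans hr2
  set s := ‖w‖ with hs
  set t := ‖w ^ 2 - 1‖ with htdef
  have habs : q * s * t = 1 := by
    have h1 : (q : ℂ) * (w * (w ^ 2 - 1)) = -1 := by linear_combination heq
    have h2 := congrArg norm h1
    rw [norm_mul, norm_mul] at h2
    rw [mul_assoc]
    simpa [Complex.norm_real, abs_of_pos hq0] using h2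
  have hs0 : 0 ≤ s := norm_nonneg _
  have ht0 : 0 ≤ t := norm_nonneg _
  have hre2 : (w ^ 2 - 1).re = w.re ^ 2 - w.im ^ 2 - 1 := by
    simp [pow_two, Complex.mul_re]
  have ht1 : 1 - w.re ^ 2 ≤ t := by
    have h1 : |(w ^ 2 - 1).re| ≤ t := Complex.abs_re_le_norm _
    rw [hre2] at h1
    have h3 := neg_abs_le (w.re ^ 2 - w.im ^ 2 - 1)
    nlinarith [sq_nonneg w.im]
  have hqa : w.re * q ≤ 2 := (le_div_iff₀ hq0).mp ha
  have hqa2 : (w.re * q) ^ 2 ≤ 4 := by nlinarith [mul_pos hre hq0]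
  have e : s * t * q * q = q := by linear_combination q * habs
  have hq2t : q ^ 2 - 4 ≤ q ^ 2 * t := by
    nlinarith [mul_le_mul_of_nonneg_left ht1 (sq_nonneg q)]
  have h1 : s * (q * q - 4) ≤ q := by
    nlinarith [mul_le_mul_of_nonneg_left hq2t hs0, e]
  rw [le_div_iff₀ hq0]
  have hq4 : 5 ≤ q * q - 4 := by nlinarith
  nlinarith [mul_le_mul_of_nonneg_left h1 hq0.le, hq4]

lemma Htilde_bounds (q : ℝ) (hq : 3 ≤ q) :
    (1 - 2/q)/(1 + 2/q) * Real.exp (-(4/q)) ≤ Htilde q ∧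
    Htilde q ≤ (1 + 2/q)/(1 - 2/q) * Real.exp (4/q) := by
  have hq0 : (0:ℝ) < q := by linarith
  unfold Htilde
  set w := Classical.epsilon (IsQtilde q) with hwdef
  have hw : IsQtilde q w := Classical.epsilon_spec (exists_isQtilde q hq)
  have hs : ‖w‖ ≤ 2 / q := abs_le_of_isQtilde q hq hw
  have hs0 : 0 ≤ ‖w‖ := norm_nonneg _
  have hc1 : 2 / q ≤ 2 / 3 := by
    rw [div_le_div_iff₀ hq0 (by norm_num)]; linarith
  have hpos : (0:ℝ) < 1 - 2 / q := by linarith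
  have hN1 : 1 - 2 / q ≤ ‖w - 1‖ := by
    have h := norm_add_le (1 - w) w
    simp only [sub_add_cancel, norm_one] at h
    rw [norm_sub_rev]
    linarith
  have hN2 : ‖w - 1‖ ≤ 1 + 2 / q := by
    have h := norm_sub_le_norm_sub_add_norm_sub w 0 1
    simp at h
    linarith
  have hD1 : 1 - 2 / q ≤ ‖w + 1‖ := by
    have h := norm_add_le (w + 1) (-w)
    rw [show w + 1 + -w = (1:ℂ) by ring] at h
    simp only [norm_one, norm_neg] at h
    linarith
  have hD2 : ‖w + 1‖ ≤ 1 + 2 / q := by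
    have h := norm_add_le w 1
    simp only [norm_one] at h
    linarith
  have hDpos : (0:ℝ) < ‖w + 1‖ := lt_of_lt_of_le hpos hD1
  have hAbsDiv : ‖(w - 1) / (w + 1)‖
      = ‖w - 1‖ / ‖w + 1‖ := norm_div _ _
  have hre : |(w ^ 2).re| ≤ 4 / q ^ 2 := by
    have h1 : |(w ^ 2).re| ≤ ‖w ^ 2‖ := Complex.abs_re_le_norm _
    have h2 : ‖w ^ 2‖ = ‖w‖ ^ 2 := norm_pow _ _
    have h3 : ‖w‖ ^ 2 ≤ 4 / q ^ 2 := by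
      rw [show (4:ℝ)/q^2 = (2/q)^2 by ring]
      exact pow_le_pow_left₀ hs0 hs 2
    rw [h2] at h1
    linarith
  have h5 : q * (4 / q ^ 2) = 4 / q := by field_simp
  have hexp1 : -(4 / q) ≤ q * (w ^ 2).re := by
    have := (abs_le.mp hre).1
    nlinarith
  have hexp2 : q * (w ^ 2).re ≤ 4 / q := by
    have := (abs_le.mp hre).2
    nlinarith
  rw [hAbsDiv]
  constructor
  · exact mul_le_mul
      (div_le_div₀ (by linarith) hN1 hDpos hD2)
      (Real.exp_le_exp.mpr hexp1) (Real.exp_pos _).le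
      (div_nonneg (by linarith) hDpos.le)
  · exact mul_le_mul
      (div_le_div₀ (by linarith) hN2 hpos hD1)
      (Real.exp_le_exp.mpr hexp2) (Real.exp_pos _).le
      (div_nonneg (by linarith) hpos.le)

/-- H̃(q) → 1 as q → +∞. -/
theorem Htilde_tendsto_atTop :
    Tendsto Htilde atTop (nhds 1) := by
  have hc : Tendsto (fun q : ℝ => 2 / q) atTop (nhds 0) :=
    tendsto_const_nhds.div_atTop tendsto_id
  have hc4 : Tendsto (fun q : ℝ => 4 / q) atTop (nhds 0) :=
    tendsto_const_nhds.div_atTop tendsto_id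
  have hg : Tendsto (fun q : ℝ => (1 - 2/q)/(1 + 2/q) * Real.exp (-(4/q))) atTop (nhds 1) := by
    have h1 := ((tendsto_const_nhds : Tendsto (fun _ : ℝ => (1:ℝ)) atTop (nhds 1)).sub hc).div ((tendsto_const_nhds : Tendsto (fun _ : ℝ => (1:ℝ)) atTop (nhds 1)).add hc)
      (by norm_num : (1:ℝ) + 0 ≠ 0)
    have h2 := (Real.continuous_exp.tendsto 0).comp
      (by simpa using hc4.neg : Tendsto (fun x : ℝ => -(4/x)) atTop (nhds 0))
    have h3 := h1.mul h2
    norm_num at h3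
    convert h3 using 2 <;> simp [Function.comp]
  have hh : Tendsto (fun q : ℝ => (1 + 2/q)/(1 - 2/q) * Real.exp (4/q)) atTop (nhds 1) := by
    have h1 := ((tendsto_const_nhds : Tendsto (fun _ : ℝ => (1:ℝ)) atTop (nhds 1)).add hc).div ((tendsto_const_nhds : Tendsto (fun _ : ℝ => (1:ℝ)) atTop (nhds 1)).sub hc)
      (by norm_num : (1:ℝ) - 0 ≠ 0)
    have h2 := (Real.continuous_exp.tendsto 0).comp hc4
    have h3 := h1.mul h2
    norm_num at h3
    convert h3 using 2 <;> simp [Function.comp]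
  refine tendsto_of_tendsto_of_tendsto_of_le_of_le' hg hh ?_ ?_
  · filter_upwards [eventually_ge_atTop (3:ℝ)] with q hq
    exact (Htilde_bounds q hq).1
  · filter_upwards [eventually_ge_atTop (3:ℝ)] with q hq
    exact (Htilde_bounds q hq).2
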